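/- Let m, m̂, λ, λ̂ > 0 and 0 ≤ k < 1 with k̄ = 1 - k². The function f(a, â) = (m̂(1 + mλa k̄) + m(1 + m̂λ̂â k̄))/(1 + mλa + m̂λ̂â + mλa m̂λ̂â k̄) is a convex function of (a, â) on [0,∞)². -/

import Mathlib

open Set

/-- Affine functions on `ℝ × ℝ` are concave. -/
lemma affine_concaveOn {s : Set (ℝ × ℝ)} (hs : Convex ℝ s) (c d e : ℝ) :
    ConcaveOn ℝ s (fun p : ℝ × ℝ => c * p.1 + d * p.2 + e) := by
  refine ⟨hs, fun p hp q hq a b ha hb hab => ?_⟩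
  simp only [Prod.smul_fst, Prod.smul_snd, Prod.fst_add, Prod.snd_add, smul_eq_mul]
  apply le_of_eq
  linear_combination e * hab

/-- Positive combination of positive reals is positive. -/
lemma combo_pos {a b u v : ℝ} (ha : 0 ≤ a) (hb : 0 ≤ b) (hab : a + b = 1)
    (hu : 0 < u) (hv : 0 < v) : 0 < a * u + b * v := by
  rcases eq_or_lt_of_le ha with h | h
  · have hb1 : b = 1 := by linarith
    rw [← h, hb1]; simpa using hv
  · exact add_pos_of_pos_of_nonneg (mul_pos h hu) (mul_nonneg hb hv.le)

/-- Key inequality: convexity of `x ↦ x⁻¹` on positives. -/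
lemma inv_combo_le {u v a b : ℝ} (hu : 0 < u) (hv : 0 < v) (ha : 0 ≤ a) (hb : 0 ≤ b)
    (hab : a + b = 1) : (a * u + b * v)⁻¹ ≤ a * u⁻¹ + b * v⁻¹ := by
  have h := (convexOn_zpow (𝕜 := ℝ) (-1)).2 (mem_Ioi.2 hu) (mem_Ioi.2 hv) ha hb hab
  simpa [smul_eq_mul, zpow_neg, zpow_one] using h

/-- The reciprocal of a positive concave function is convex. -/
lemma concave_pos_inv_convexOn {s : Set (ℝ × ℝ)} {g : ℝ × ℝ → ℝ}
    (hg : ConcaveOn ℝ s g) (hpos : ∀ p ∈ s, 0 < g p) :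
    ConvexOn ℝ s (fun p => (g p)⁻¹) := by
  refine ⟨hg.1, fun p hp q hq a b ha hb hab => ?_⟩
  simp only [smul_eq_mul]
  have hgp := hpos p hp
  have hgq := hpos q hq
  have hconc : a * g p + b * g q ≤ g (a • p + b • q) := by
    have := hg.2 hp hq ha hb hab
    simpa [smul_eq_mul] using this
  have hcomb : 0 < a * g p + b * g q := combo_pos ha hb hab hgp hgq
  calc (g (a • p + b • q))⁻¹ ≤ (a * g p + b * g q)⁻¹ :=
        inv_anti₀ hcomb hconc
    _ ≤ a * (g p)⁻¹ + b * (g q)⁻¹ := inv_combo_le hgp hgq ha hb hab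

/-- The algebraic identity relating the original fraction with the decomposition. -/
lemma key_identity (mm mmh x y kb : ℝ) (hkb : 0 < kb)
    (hx : 0 ≤ x) (hy : 0 ≤ y) :
    mmh * ((y + 1 / kb) - (1 - kb) / kb ^ 2 * (x + 1 / kb)⁻¹)⁻¹ +
      mm * ((x + 1 / kb) - (1 - kb) / kb ^ 2 * (y + 1 / kb)⁻¹)⁻¹ =
    (mmh * (1 + x * kb) + mm * (1 + y * kb)) / (1 + x + y + x * y * kb) := by
  have hu : 0 < x + 1 / kb := by positivity
  have hv : 0 < y + 1 / kb := by positivity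
  have hw : 0 < (x + 1 / kb) * (y + 1 / kb) - (1 - kb) / kb ^ 2 := by
    have h1 : 1 / kb ≤ x + 1 / kb := by linarith
    have h2 : 1 / kb ≤ y + 1 / kb := by linarith
    have h3 : 1 / kb * (1 / kb) ≤ (x + 1 / kb) * (y + 1 / kb) :=
      mul_le_mul h1 h2 (by positivity) hu.le
    have h4 : (1 - kb) / kb ^ 2 + 1 / kb = 1 / kb * (1 / kb) := by
      field_simp; ring
    have h5 : 0 < 1 / kb := by positivity
    nlinarith
  have hD : 0 < 1 + x + y + x * y * kb := by
    have := mul_nonneg (mul_nonneg hx hy) hkb.le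
    linarith
  have h1 : (y + 1 / kb) - (1 - kb) / kb ^ 2 * (x + 1 / kb)⁻¹
      = ((x + 1 / kb) * (y + 1 / kb) - (1 - kb) / kb ^ 2) / (x + 1 / kb) := by
    field_simp
  have h2 : (x + 1 / kb) - (1 - kb) / kb ^ 2 * (y + 1 / kb)⁻¹
      = ((x + 1 / kb) * (y + 1 / kb) - (1 - kb) / kb ^ 2) / (y + 1 / kb) := by
    field_simp
  rw [h1, h2, inv_div, inv_div, ← mul_div_assoc, ← mul_div_assoc, ← add_div,
    div_eq_div_iff hw.ne' hD.ne']
  field_simp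
  ring

/-- Positivity of the factor `g1 = v - c/u` on the domain. -/
lemma g_pos {x y kb : ℝ} (hkb : 0 < kb) (hkb1 : kb ≤ 1) (hx : 0 ≤ x) (hy : 0 ≤ y) :
    0 < (y + 1 / kb) - (1 - kb) / kb ^ 2 * (x + 1 / kb)⁻¹ := by
  have hu : 0 < x + 1 / kb := by positivity
  have hbound : (1 - kb) / kb ^ 2 * (x + 1 / kb)⁻¹ ≤ (1 - kb) / kb := by
    have hinv : (x + 1 / kb)⁻¹ ≤ kb := by
      rw [inv_le_comm₀ hu hkb]
      have : (kb)⁻¹ = 1 / kb := (one_div kb).symm.symm ▸ (one_div kb).symm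
      rw [inv_eq_one_div]
      linarith
    have hc : 0 ≤ (1 - kb) / kb ^ 2 := by
      apply div_nonneg (by linarith) (by positivity)
    calc (1 - kb) / kb ^ 2 * (x + 1 / kb)⁻¹ ≤ (1 - kb) / kb ^ 2 * kb :=
          mul_le_mul_of_nonneg_left hinv hc
      _ = (1 - kb) / kb := by field_simp
  have hgeq : 1 / kb - (1 - kb) / kb = 1 := by field_simp; ring
  have hvge : 1 / kb ≤ y + 1 / kb := by linarith
  nlinarith

theorem stmt_11 (m mh lam lamh k : ℝ) (hm : 0 < m) (hmh : 0 < mh)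
    (hlam : 0 < lam) (hlamh : 0 < lamh) (hk0 : 0 ≤ k) (hk1 : k < 1) :
    ConvexOn ℝ (Set.Ici 0 ×ˢ Set.Ici 0)
      (fun p : ℝ × ℝ =>
        (mh * (1 + m * lam * p.1 * (1 - k ^ 2)) + m * (1 + mh * lamh * p.2 * (1 - k ^ 2))) /
          (1 + m * lam * p.1 + mh * lamh * p.2 + m * lam * p.1 * mh * lamh * p.2 * (1 - k ^ 2))) := by
  have hkb : 0 < 1 - k ^ 2 := by nlinarith
  have hkb1 : 1 - k ^ 2 ≤ 1 := by nlinarith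
  set kb : ℝ := 1 - k ^ 2 with hkb_def
  set c : ℝ := (1 - kb) / kb ^ 2 with hc_def
  have hc : 0 ≤ c := div_nonneg (by linarith) (by positivity)
  set S : Set (ℝ × ℝ) := Set.Ici 0 ×ˢ Set.Ici 0 with hS_def
  have hSconv : Convex ℝ S := (convex_Ici (0 : ℝ)).prod (convex_Ici 0)
  set u : ℝ × ℝ → ℝ := fun p => (m * lam * p.1 + 1 / kb) with hu_def
  set v : ℝ × ℝ → ℝ := fun p => (mh * lamh * p.2 + 1 / kb) with hv_def
  have hxS : ∀ p ∈ S, 0 ≤ m * lam * p.1 := by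
    rintro ⟨p1, p2⟩ ⟨h1, h2⟩
    exact mul_nonneg (mul_nonneg hm.le hlam.le) h1
  have hyS : ∀ p ∈ S, 0 ≤ mh * lamh * p.2 := by
    rintro ⟨p1, p2⟩ ⟨h1, h2⟩
    exact mul_nonneg (mul_nonneg hmh.le hlamh.le) h2
  have hu_pos : ∀ p ∈ S, 0 < u p := by
    intro p hp
    have := hxS p hp
    have h0 : 0 < 1 / kb := by positivity
    simp only [hu_def]; linarith
  have hv_pos : ∀ p ∈ S, 0 < v p := by
    intro p hp
    have := hyS p hp
    have h0 : 0 < 1 / kb := by positivity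
    simp only [hv_def]; linarith
  have hu_conc : ConcaveOn ℝ S u := by
    have := affine_concaveOn hSconv (m * lam) 0 (1 / kb)
    simpa [hu_def] using this
  have hv_conc : ConcaveOn ℝ S v := by
    have := affine_concaveOn hSconv 0 (mh * lamh) (1 / kb)
    simpa [hv_def] using this
  have hicu : ConvexOn ℝ S (fun p => c * (u p)⁻¹) := by
    have h := (concave_pos_inv_convexOn hu_conc hu_pos).smul hc
    simpa [smul_eq_mul] using h
  have hicv : ConvexOn ℝ S (fun p => c * (v p)⁻¹) := by
    have h := (concave_pos_inv_convexOn hv_conc hv_pos).smul hc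
    simpa [smul_eq_mul] using h
  have hg1_conc : ConcaveOn ℝ S (fun p => v p - c * (u p)⁻¹) := by
    have := hv_conc.sub hicu
    simpa [Pi.sub_def] using this
  have hg2_conc : ConcaveOn ℝ S (fun p => u p - c * (v p)⁻¹) := by
    have := hu_conc.sub hicv
    simpa [Pi.sub_def] using this
  have hg1_pos : ∀ p ∈ S, 0 < v p - c * (u p)⁻¹ := by
    intro p hp
    have := g_pos (x := m * lam * p.1) (y := mh * lamh * p.2) hkb hkb1 (hxS p hp) (hyS p hp)
    simpa [hu_def, hv_def, hc_def] using this
  have hg2_pos : ∀ p ∈ S, 0 < u p - c * (v p)⁻¹ := by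
    intro p hp
    have := g_pos (x := mh * lamh * p.2) (y := m * lam * p.1) hkb hkb1 (hyS p hp) (hxS p hp)
    simpa [hu_def, hv_def, hc_def] using this
  have hsum : ConvexOn ℝ S
      (fun p => mh * (v p - c * (u p)⁻¹)⁻¹ + m * (u p - c * (v p)⁻¹)⁻¹) := by
    have h1 := (concave_pos_inv_convexOn hg1_conc hg1_pos).smul hmh.le
    have h2 := (concave_pos_inv_convexOn hg2_conc hg2_pos).smul hm.le
    have := h1.add h2
    simpa [smul_eq_mul, Pi.add_def] using this
  refine hsum.congr ?_
  intro p hp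
  have hid := key_identity m mh (m * lam * p.1) (mh * lamh * p.2) kb hkb (hxS p hp) (hyS p hp)
  simp only [hu_def, hv_def, hc_def]
  convert hid using 2 <;> ring
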